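/- For m ∈ Y^β with m_i = m_{i+1}, the KLR relations imply the divided-difference (Demazure) identity: τ_i f(z_i, z_{i+1}) e(m) - f(z_{i+1}, z_i) τ_i e(m) = ∂_i(f)(z_i,z_{i+1}) e(m) for any polynomial f in two variables, where ∂_i(f)(u,v) = (f(v,u) - f(u,v))/(u-v); in particular for symmetric polynomials f, τ_i commutes with f(z_i, z_{i+1}) on e(m). -/

import Mathlib

open MvPolynomial

/-- Evaluation of a two-variable polynomial `f ∈ ℂ[u,v]` at a pair of elements of a
(noncommutative) `ℂ`-algebra: `u ↦ a`, `v ↦ b`. -/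
noncomputable def ev2 {R : Type*} [Ring R] [Algebra ℂ R] (a b : R)
    (f : MvPolynomial (Fin 2) ℂ) : R :=
  (AddMonoidAlgebra.coeff f).sum fun s c => algebraMap ℂ R c * a ^ (s 0) * b ^ (s 1)


section ev2lemmas
variable {R : Type*} [Ring R] [Algebra ℂ R] (a b : R)

lemma ev2_monomial (s : Fin 2 →₀ ℕ) (c : ℂ) :
    ev2 a b (monomial s c) = algebraMap ℂ R c * a ^ (s 0) * b ^ (s 1) := by
  rw [ev2, sum_monomial_eq]; simp

lemma ev2_zero : ev2 a b 0 = 0 := by simp [ev2]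

lemma ev2_add (f g : MvPolynomial (Fin 2) ℂ) :
    ev2 a b (f + g) = ev2 a b f + ev2 a b g := by
  rw [ev2, ev2, ev2]
  apply Finsupp.sum_add_index'
  · intro s; simp
  · intro s c₁ c₂; rw [map_add, add_mul, add_mul]

lemma ev2_finsetSum {ι : Type*} (T : Finset ι) (F : ι → MvPolynomial (Fin 2) ℂ) :
    ev2 a b (∑ i ∈ T, F i) = ∑ i ∈ T, ev2 a b (F i) := by
  classical
  induction T using Finset.induction with
  | empty => simp [ev2_zero]
  | insert _ _ h ih => rw [Finset.sum_insert h, Finset.sum_insert h, ev2_add, ih]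

lemma ev2_sub (f g : MvPolynomial (Fin 2) ℂ) :
    ev2 a b (f - g) = ev2 a b f - ev2 a b g := by
  have := ev2_add a b (f - g) g
  rw [sub_add_cancel] at this
  rw [this]; abel

lemma ev2_C (c : ℂ) : ev2 a b (C c) = algebraMap ℂ R c := by
  rw [show (C c : MvPolynomial (Fin 2) ℂ) = monomial 0 c from rfl, ev2_monomial]
  simp

lemma X_eq_monomial (n : Fin 2) :
    (X n : MvPolynomial (Fin 2) ℂ) = monomial (Finsupp.single n 1) 1 := rfl

lemma ev2_mul_X0 (hab : a * b = b * a) (f : MvPolynomial (Fin 2) ℂ) :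
    ev2 a b (f * X 0) = ev2 a b f * a := by
  conv_lhs => rw [f.as_sum, Finset.sum_mul]
  rw [ev2_finsetSum]
  conv_rhs => rw [f.as_sum, ev2_finsetSum, Finset.sum_mul]
  refine Finset.sum_congr rfl fun s _ => ?_
  rw [X_eq_monomial, monomial_mul, mul_one, ev2_monomial, ev2_monomial]
  have h0 : (s + Finsupp.single (0 : Fin 2) 1 : Fin 2 →₀ ℕ) 0 = s 0 + 1 := by simp
  have h1' : (s + Finsupp.single (0 : Fin 2) 1 : Fin 2 →₀ ℕ) 1 = s 1 := by simp
  have hba : b ^ (s 1) * a = a * b ^ (s 1) :=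
    Commute.pow_left (hab.symm : Commute b a) (s 1)
  rw [h0, h1', pow_succ]
  simp only [mul_assoc]
  rw [hba]

lemma ev2_mul_X1 (f : MvPolynomial (Fin 2) ℂ) :
    ev2 a b (f * X 1) = ev2 a b f * b := by
  conv_lhs => rw [f.as_sum, Finset.sum_mul]
  rw [ev2_finsetSum]
  conv_rhs => rw [f.as_sum, ev2_finsetSum, Finset.sum_mul]
  refine Finset.sum_congr rfl fun s _ => ?_
  rw [X_eq_monomial, monomial_mul, mul_one, ev2_monomial, ev2_monomial]
  have h0 : (s + Finsupp.single (1 : Fin 2) 1 : Fin 2 →₀ ℕ) 0 = s 0 := by simp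
  have h1' : (s + Finsupp.single (1 : Fin 2) 1 : Fin 2 →₀ ℕ) 1 = s 1 + 1 := by simp
  rw [h0, h1', pow_succ]
  simp only [mul_assoc]

lemma ev2_swap (hab : a * b = b * a) (f : MvPolynomial (Fin 2) ℂ) :
    ev2 a b (rename (Equiv.swap (0 : Fin 2) 1) f) = ev2 b a f := by
  conv_lhs => rw [f.as_sum, map_sum]
  rw [ev2_finsetSum]
  conv_rhs => rw [f.as_sum, ev2_finsetSum]
  refine Finset.sum_congr rfl fun s _ => ?_
  rw [rename_monomial, ev2_monomial, ev2_monomial]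
  have h0 : (Finsupp.mapDomain (Equiv.swap (0 : Fin 2) 1) s) 0 = s 1 := by
    rw [show (0 : Fin 2) = Equiv.swap (0 : Fin 2) 1 1 from (Equiv.swap_apply_right _ _).symm,
      Finsupp.mapDomain_equiv_apply]
    simp
  have h1' : (Finsupp.mapDomain (Equiv.swap (0 : Fin 2) 1) s) 1 = s 0 := by
    rw [show (1 : Fin 2) = Equiv.swap (0 : Fin 2) 1 0 from (Equiv.swap_apply_left _ _).symm,
      Finsupp.mapDomain_equiv_apply]
    simp
  rw [h0, h1']
  have : a ^ (s 1) * b ^ (s 0) = b ^ (s 0) * a ^ (s 1) :=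
    Commute.pow_pow (hab : Commute a b) _ _
  simp only [mul_assoc]
  rw [this]

lemma ev2_commute (x : R) (ha : a * x = x * a) (hb : b * x = x * b)
    (f : MvPolynomial (Fin 2) ℂ) : ev2 a b f * x = x * ev2 a b f := by
  have h : ∀ s ∈ f.support,
      Commute x (algebraMap ℂ R (coeff s f) * a ^ (s 0) * b ^ (s 1)) := by
    intro s _
    exact Commute.mul_right
      (Commute.mul_right ((Algebra.commutes (coeff s f) x).symm)
        (Commute.pow_right (show Commute x a from ha.symm) _))
      (Commute.pow_right (show Commute x b from hb.symm) _)
  have := Commute.sum_right f.support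
    (fun s => algebraMap ℂ R (coeff s f) * a ^ (s 0) * b ^ (s 1)) x h
  rw [ev2]
  exact this.symm.eq

end ev2lemmas

/-- The divided-difference (Demazure) identity in the KLR algebra for `m_i = m_{i+1}`:
with `τ = τ_i`, `z₁ = z_i`, `z₂ = z_{i+1}`, `e = e(m)` and relation (6)
(`τ z_i e = z_{i+1} τ e - e`, `τ z_{i+1} e = z_i τ e + e`), for any polynomial `f(u,v)`
and any `g` with `(u - v) g = f(v,u) - f(u,v)` (i.e. `g = ∂_i f`), one has
`τ f(z_i, z_{i+1}) e - f(z_{i+1}, z_i) τ e = (∂_i f)(z_i, z_{i+1}) e`; in particular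
`τ_i` commutes with `f(z_i, z_{i+1})` on `e(m)` for symmetric `f`. -/
theorem demazure_identity {R : Type*} [Ring R] [Algebra ℂ R] (τ z₁ z₂ e : R)
    (hzz : z₁ * z₂ = z₂ * z₁) (hz₁e : z₁ * e = e * z₁) (hz₂e : z₂ * e = e * z₂)
    (h1 : τ * (z₁ * e) = z₂ * (τ * e) - e)
    (h2 : τ * (z₂ * e) = z₁ * (τ * e) + e) :
    (∀ f g : MvPolynomial (Fin 2) ℂ,
      (X 0 - X 1 : MvPolynomial (Fin 2) ℂ) * g =
        rename (Equiv.swap (0 : Fin 2) 1) f - f →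
      τ * (ev2 z₁ z₂ f * e) - ev2 z₂ z₁ f * (τ * e) = ev2 z₁ z₂ g * e) ∧
    (∀ f : MvPolynomial (Fin 2) ℂ,
      rename (Equiv.swap (0 : Fin 2) 1) f = f →
      τ * (ev2 z₁ z₂ f * e) = ev2 z₁ z₂ f * (τ * e)) := by
  have hez : ∀ f, ev2 z₁ z₂ f * e = e * ev2 z₁ z₂ f := fun f =>
    ev2_commute z₁ z₂ e hz₁e hz₂e f
  have hz1 : ∀ f, ev2 z₁ z₂ f * z₁ = z₁ * ev2 z₁ z₂ f := fun f =>
    ev2_commute z₁ z₂ z₁ rfl hzz.symm f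
  have hz2 : ∀ f, ev2 z₁ z₂ f * z₂ = z₂ * ev2 z₁ z₂ f := fun f =>
    ev2_commute z₁ z₂ z₂ hzz rfl f
  have hz1' : ∀ f, ev2 z₂ z₁ f * z₁ = z₁ * ev2 z₂ z₁ f := fun f =>
    ev2_commute z₂ z₁ z₁ hzz.symm rfl f
  have hz2' : ∀ f, ev2 z₂ z₁ f * z₂ = z₂ * ev2 z₂ z₁ f := fun f =>
    ev2_commute z₂ z₁ z₂ rfl hzz f
  -- generalized relation (6)
  have H1 : ∀ P : R, P * e = e * P →
      τ * (z₁ * (P * e)) = z₂ * (τ * (P * e)) - P * e := by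
    intro P hP
    calc τ * (z₁ * (P * e)) = τ * (z₁ * e) * P := by
          rw [hP, ← mul_assoc z₁, ← mul_assoc]
      _ = (z₂ * (τ * e) - e) * P := by rw [h1]
      _ = z₂ * (τ * (e * P)) - e * P := by rw [sub_mul, mul_assoc, mul_assoc]
      _ = z₂ * (τ * (P * e)) - P * e := by rw [hP]
  have H2 : ∀ P : R, P * e = e * P →
      τ * (z₂ * (P * e)) = z₁ * (τ * (P * e)) + P * e := by
    intro P hP
    calc τ * (z₂ * (P * e)) = τ * (z₂ * e) * P := by
          rw [hP, ← mul_assoc z₂, ← mul_assoc]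
      _ = (z₁ * (τ * e) + e) * P := by rw [h2]
      _ = z₁ * (τ * (e * P)) + e * P := by rw [add_mul, mul_assoc, mul_assoc]
      _ = z₁ * (τ * (P * e)) + P * e := by rw [hP]
  -- main induction: existence of a divided difference
  have key : ∀ f : MvPolynomial (Fin 2) ℂ, ∃ g : MvPolynomial (Fin 2) ℂ,
      (X 0 - X 1 : MvPolynomial (Fin 2) ℂ) * g =
        rename (Equiv.swap (0 : Fin 2) 1) f - f ∧
      τ * (ev2 z₁ z₂ f * e) - ev2 z₂ z₁ f * (τ * e) = ev2 z₁ z₂ g * e := by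
    intro f
    induction f using MvPolynomial.induction_on with
    | C c =>
        refine ⟨0, by simp, ?_⟩
        rw [ev2_C, ev2_C, ev2_zero, zero_mul, ← Algebra.smul_def, ← Algebra.smul_def,
          mul_smul_comm, sub_self]
    | add p q hp hq =>
        obtain ⟨gp, hgp, hip⟩ := hp
        obtain ⟨gq, hgq, hiq⟩ := hq
        refine ⟨gp + gq, by rw [mul_add, hgp, hgq, map_add]; ring, ?_⟩
        rw [ev2_add, ev2_add, ev2_add, add_mul, mul_add, add_mul, add_mul, ← hip, ← hiq]
        abel
    | mul_X p n hp =>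
        obtain ⟨g, hg, hi⟩ := hp
        have heq : τ * (ev2 z₁ z₂ p * e) = ev2 z₂ z₁ p * (τ * e) + ev2 z₁ z₂ g * e := by
          rw [← hi]; abel
        fin_cases n <;> simp only [Fin.zero_eta, Fin.mk_one]
        · refine ⟨g * X 1 - p, ?_, ?_⟩
          · rw [map_mul, rename_X,
              show (Equiv.swap (0 : Fin 2) 1) 0 = 1 from Equiv.swap_apply_left _ _]
            linear_combination (X 1 : MvPolynomial (Fin 2) ℂ) * hg
          · rw [ev2_mul_X0 z₁ z₂ hzz, ev2_mul_X0 z₂ z₁ hzz.symm, ev2_sub,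
              ev2_mul_X1 z₁ z₂]
            calc τ * (ev2 z₁ z₂ p * z₁ * e) - ev2 z₂ z₁ p * z₂ * (τ * e)
                = τ * (z₁ * (ev2 z₁ z₂ p * e)) - ev2 z₂ z₁ p * z₂ * (τ * e) := by
                  rw [hz1, mul_assoc]
              _ = (z₂ * (τ * (ev2 z₁ z₂ p * e)) - ev2 z₁ z₂ p * e)
                    - ev2 z₂ z₁ p * z₂ * (τ * e) := by rw [H1 _ (hez p)]
              _ = (z₂ * (ev2 z₂ z₁ p * (τ * e) + ev2 z₁ z₂ g * e) - ev2 z₁ z₂ p * e)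
                    - z₂ * (ev2 z₂ z₁ p * (τ * e)) := by rw [heq, hz2', mul_assoc]
              _ = z₂ * (ev2 z₁ z₂ g * e) - ev2 z₁ z₂ p * e := by rw [mul_add]; abel
              _ = (ev2 z₁ z₂ g * z₂ - ev2 z₁ z₂ p) * e := by
                  rw [sub_mul, hz2, mul_assoc]
        · refine ⟨g * X 0 + p, ?_, ?_⟩
          · rw [map_mul, rename_X,
              show (Equiv.swap (0 : Fin 2) 1) 1 = 0 from Equiv.swap_apply_right _ _]
            linear_combination (X 0 : MvPolynomial (Fin 2) ℂ) * hg
          · rw [ev2_mul_X1 z₁ z₂, ev2_mul_X1 z₂ z₁, ev2_add,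
              ev2_mul_X0 z₁ z₂ hzz]
            calc τ * (ev2 z₁ z₂ p * z₂ * e) - ev2 z₂ z₁ p * z₁ * (τ * e)
                = τ * (z₂ * (ev2 z₁ z₂ p * e)) - ev2 z₂ z₁ p * z₁ * (τ * e) := by
                  rw [hz2, mul_assoc]
              _ = (z₁ * (τ * (ev2 z₁ z₂ p * e)) + ev2 z₁ z₂ p * e)
                    - ev2 z₂ z₁ p * z₁ * (τ * e) := by rw [H2 _ (hez p)]
              _ = (z₁ * (ev2 z₂ z₁ p * (τ * e) + ev2 z₁ z₂ g * e) + ev2 z₁ z₂ p * e)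
                    - z₁ * (ev2 z₂ z₁ p * (τ * e)) := by rw [heq, hz1', mul_assoc]
              _ = z₁ * (ev2 z₁ z₂ g * e) + ev2 z₁ z₂ p * e := by rw [mul_add]; abel
              _ = (ev2 z₁ z₂ g * z₁ + ev2 z₁ z₂ p) * e := by
                  rw [add_mul, hz1, mul_assoc]
  have hne : (X 0 - X 1 : MvPolynomial (Fin 2) ℂ) ≠ 0 := by
    intro h
    have := congrArg (eval ![(1 : ℂ), 0]) h
    simp at this
  have main : ∀ f g : MvPolynomial (Fin 2) ℂ,
      (X 0 - X 1 : MvPolynomial (Fin 2) ℂ) * g =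
        rename (Equiv.swap (0 : Fin 2) 1) f - f →
      τ * (ev2 z₁ z₂ f * e) - ev2 z₂ z₁ f * (τ * e) = ev2 z₁ z₂ g * e := by
    intro f g hgf
    obtain ⟨g₀, hg₀, hid⟩ := key f
    have hgg : g = g₀ := mul_left_cancel₀ hne (by rw [hg₀, hgf])
    rw [hgg]
    exact hid
  refine ⟨main, fun f hf => ?_⟩
  have h := main f 0 (by rw [hf]; simp)
  rw [ev2_zero, zero_mul] at h
  have hsym : ev2 z₂ z₁ f = ev2 z₁ z₂ f := by
    rw [← hf, ev2_swap z₁ z₂ hzz f, hf]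
  rw [hsym] at h
  exact sub_eq_zero.mp h
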